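/- Let A be a simplicial complex on a nonempty finite set X with n elements, i.e., a collection of subsets of X containing ∅ that is closed under taking subsets. Then for every natural number k with k ≤ n/2, the number of members of A of cardinality k is at least the number of members of A of cardinality n − k. -/
import Mathlib


open Finset

/-- For a simplicial complex `A` on a nonempty finite set `X` with `n` elements
(`∅ ∈ A` and `A` is closed under taking subsets), for every `k ≤ n/2` the number
of members of `A` of cardinality `n - k` is at most the number of members of
cardinality `k`. -/
theorem simplicialComplex_card_layer_le {X : Type*} [Fintype X] [DecidableEq X]
    [Nonempty X] (A : Finset (Finset X))
    (hempty : ∅ ∈ A) (hdown : ∀ B ∈ A, ∀ C ⊆ B, C ∈ A)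
    (k : ℕ) (hk : (k : ℝ) ≤ (Fintype.card X : ℝ) / 2) :
    (A.filter fun B => B.card = Fintype.card X - k).card ≤
      (A.filter fun B => B.card = k).card := by
  set n := Fintype.card X with hn
  have hkn : 2 * k ≤ n := by
    have : (2 * k : ℝ) ≤ n := by linarith
    exact_mod_cast this
  have hkk : k ≤ n - k := by omega
  set m := (n - k).choose k with hm
  have hmpos : 0 < m := Nat.choose_pos hkk
  set s := A.filter fun B => B.card = n - k with hs
  set t := A.filter fun B => B.card = k with ht
  have key : s.card * m ≤ t.card * m := by
    apply Finset.card_mul_le_card_mul (fun T S => S ⊆ T)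
    · -- each T of size n - k has at least m subsets of size k in t
      intro T hT
      rw [hs, mem_filter] at hT
      have hsub : T.powersetCard k ⊆ t.bipartiteAbove (fun T S => S ⊆ T) T := by
        intro S hS
        rw [Finset.mem_powersetCard] at hS
        rw [Finset.mem_bipartiteAbove, ht, mem_filter]
        exact ⟨⟨hdown T hT.1 S hS.1, hS.2⟩, hS.1⟩
      calc m = (T.powersetCard k).card := by
              rw [Finset.card_powersetCard, hT.2]
        _ ≤ _ := Finset.card_le_card hsub
    · -- each S of size k has at most m supersets of size n - k
      intro S hS
      rw [ht, mem_filter] at hS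
      -- map T ↦ T \ S injectively into powersetCard (n - 2*k) Sᶜ
      have : s.bipartiteBelow (fun T S => S ⊆ T) S ⊆
          (Sᶜ.powersetCard (n - 2 * k)).image (fun U => S ∪ U) := by
        intro T hT
        rw [Finset.mem_bipartiteBelow] at hT
        obtain ⟨hT1, hT2⟩ := hT
        rw [hs, mem_filter] at hT1
        rw [Finset.mem_image]
        refine ⟨T \ S, ?_, ?_⟩
        · rw [Finset.mem_powersetCard]
          constructor
          · intro x hx
            rw [Finset.mem_sdiff] at hx
            simpa using hx.2
          · rw [Finset.card_sdiff_of_subset hT2, hT1.2, hS.2]; omega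
        · rw [Finset.union_sdiff_of_subset hT2]
      calc (s.bipartiteBelow (fun T S => S ⊆ T) S).card
          ≤ ((Sᶜ.powersetCard (n - 2 * k)).image (fun U => S ∪ U)).card :=
            Finset.card_le_card this
        _ ≤ (Sᶜ.powersetCard (n - 2 * k)).card := Finset.card_image_le
        _ = (n - k).choose (n - 2 * k) := by
            rw [Finset.card_powersetCard, Finset.card_compl, hS.2]
        _ = m := by
            rw [hm, ← Nat.choose_symm hkk]
            congr 1
            omega
  exact Nat.le_of_mul_le_mul_right key hmpos
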